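/- arXiv:2205.09090 — 2 statements merged into one kernel-verified Lean document; each statement's English description precedes it below -/
import Mathlib

section
/- Fix a ≥ 0. Let ki_n^a be the number of Kostant involutions in S_n with exactly a transpositions in their cycle decomposition, and let mi_n^a be the number of 321-avoiding involutions in S_n with exactly a transpositions. Then the ratio ki_n^a / mi_n^a, viewed as a sequence of real numbers (defined for n ≥ 2a), tends to 1 as n → ∞. -/
/-- The special involution `σ_{i,j}` of `S_n`: the permutation of `{1,…,n}` that swaps
`k` and `k+j+1` for every `k` with `i-j ≤ k ≤ i` (these transpositions are pairwise
disjoint, hence commute) and fixes all other points. -/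
def sigmaPerm (i j : ℕ) : Equiv.Perm ℕ :=
  ((List.range (j + 1)).map (fun t => Equiv.swap (i - j + t) (i + t + 1))).prod

/-- The parameter constraints `1 ≤ i ≤ n-1` and `0 ≤ j ≤ min(i-1, n-1-i)` for a special
involution `σ_{i,j}` of `S_n`. -/
def SpecialParams (n i j : ℕ) : Prop :=
  1 ≤ i ∧ i ≤ n - 1 ∧ j ≤ min (i - 1) (n - 1 - i)

/-- The extended support `{i-j-1, i-j, …, i+j+2}` of `σ_{i,j}`. -/
def extSupport (i j : ℕ) : Finset ℕ := Finset.Icc (i - j - 1) (i + j + 2)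

/-- Two special involutions (given by their parameters) are distant if their extended
supports have at most one common element. -/
def Distant (p q : ℕ × ℕ) : Prop :=
  (extSupport p.1 p.2 ∩ extSupport q.1 q.2).card ≤ 1

/-- A Kostant involution in `S_n`: a product of pairwise distant special involutions
(the identity being the empty product). -/
def IsKostant (n : ℕ) (w : Equiv.Perm ℕ) : Prop :=
  ∃ L : List (ℕ × ℕ),
    (∀ p ∈ L, SpecialParams n p.1 p.2) ∧
    L.Pairwise Distant ∧
    w = (L.map (fun p => sigmaPerm p.1 p.2)).prod

/-- `ki n a` is the number of Kostant involutions in `S_n` whose cycle decomposition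
contains exactly `a` transpositions, i.e. with exactly `2a` non-fixed points. -/
noncomputable def ki (n a : ℕ) : ℕ :=
  Set.ncard {w : Equiv.Perm ℕ | IsKostant n w ∧ Set.ncard {k : ℕ | w k ≠ k} = 2 * a}


/-- `w` is a permutation of `{1,…,n}` (i.e. fixes every point outside `{1,…,n}`)
which is an involution: `w² = 1`. -/
def IsInvolutionOn (n : ℕ) (w : Equiv.Perm ℕ) : Prop :=
  (∀ k : ℕ, w k ≠ k → 1 ≤ k ∧ k ≤ n) ∧ w * w = 1

/-- `w ∈ S_n` is 321-avoiding: there are no indices `1 ≤ p < q < r ≤ n` with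
`w(p) > w(q) > w(r)`. -/
def Avoids321 (n : ℕ) (w : Equiv.Perm ℕ) : Prop :=
  ∀ p q r : ℕ, 1 ≤ p → p < q → q < r → r ≤ n → ¬ (w q < w p ∧ w r < w q)

/-- `mia n a` is the number of 321-avoiding involutions in `S_n` whose cycle decomposition
contains exactly `a` transpositions, i.e. with exactly `2a` non-fixed points. -/
noncomputable def mia (n a : ℕ) : ℕ :=
  Set.ncard {w : Equiv.Perm ℕ |
    IsInvolutionOn n w ∧ Avoids321 n w ∧ Set.ncard {k : ℕ | w k ≠ k} = 2 * a}


set_option linter.unusedSectionVars false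
set_option linter.unusedVariables false

open Equiv Finset

lemma prod_apply_of_fixed (l : List (Equiv.Perm ℕ)) (x : ℕ) (h : ∀ σ ∈ l, σ x = x) :
    l.prod x = x := by
  induction l with
  | nil => rfl
  | cons τ t ih =>
      simp only [List.prod_cons, Equiv.Perm.mul_apply]
      rw [ih (fun σ hσ => h σ (List.mem_cons_of_mem _ hσ))]
      exact h τ List.mem_cons_self

lemma prod_apply_of_mem (l : List (Equiv.Perm ℕ)) (hl : l.Pairwise Equiv.Perm.Disjoint)
    (σ : Equiv.Perm ℕ) (hσ : σ ∈ l) (x : ℕ) (hx : σ x ≠ x) : l.prod x = σ x := by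
  induction l with
  | nil => simp at hσ
  | cons τ t ih =>
      rw [List.pairwise_cons] at hl
      simp only [List.prod_cons, Equiv.Perm.mul_apply]
      rcases List.mem_cons.1 hσ with rfl | hmem
      · rw [prod_apply_of_fixed t x (fun ρ hρ => ((hl.1 ρ hρ) x).resolve_left hx)]
      · have hτσ : τ.Disjoint σ := hl.1 σ hmem
        have hτx : τ x = x := (hτσ x).resolve_right hx
        rw [ih hl.2 hmem]
        rcases hτσ (σ x) with h | h
        · exact h
        · exact absurd (σ.injective h) hx

lemma swap_disjoint_swap {a b c d : ℕ} (h1 : a ≠ c) (h2 : a ≠ d) (h3 : b ≠ c) (h4 : b ≠ d) :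
    (Equiv.swap a b).Disjoint (Equiv.swap c d) := by
  intro x
  by_cases hxa : x = a
  · subst hxa; right; exact Equiv.swap_apply_of_ne_of_ne h1 h2
  · by_cases hxb : x = b
    · subst hxb; right; exact Equiv.swap_apply_of_ne_of_ne h3 h4
    · left; exact Equiv.swap_apply_of_ne_of_ne hxa hxb

lemma sigma_swap_mem {i j t : ℕ} (ht : t < j + 1) :
    Equiv.swap (i - j + t) (i + t + 1) ∈
      (List.range (j + 1)).map (fun t => Equiv.swap (i - j + t) (i + t + 1)) :=
  List.mem_map.2 ⟨t, List.mem_range.2 ht, rfl⟩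

lemma sigma_list_pairwise (i j : ℕ) (hji : j < i) :
    ((List.range (j + 1)).map (fun t => Equiv.swap (i - j + t) (i + t + 1))).Pairwise
      Equiv.Perm.Disjoint := by
  rw [List.pairwise_iff_getElem]
  intro s t hs ht hst
  have hs' : s < j + 1 := by simpa using hs
  have ht' : t < j + 1 := by simpa using ht
  simp only [List.getElem_map, List.getElem_range]
  exact swap_disjoint_swap (by omega) (by omega) (by omega) (by omega)

lemma sigmaPermAux_fix (i j x : ℕ) (h : x < i - j ∨ i + j + 1 < x)
    (w : Equiv.Perm ℕ)
    (hw : w = ((List.range (j + 1)).map (fun t => Equiv.swap (i - j + t) (i + t + 1))).prod) :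
    w x = x := by
  subst hw
  apply prod_apply_of_fixed
  intro σ hσ
  rcases List.mem_map.1 hσ with ⟨t, htm, rfl⟩
  have ht := List.mem_range.1 htm
  exact Equiv.swap_apply_of_ne_of_ne (by omega) (by omega)

lemma sigmaPerm_def (i j : ℕ) :
    sigmaPerm i j = ((List.range (j + 1)).map (fun t => Equiv.swap (i - j + t) (i + t + 1))).prod := rfl

lemma sigmaPerm_fix {i j x : ℕ} (h : x < i - j ∨ i + j + 1 < x) : sigmaPerm i j x = x := by
  apply prod_apply_of_fixed
  intro σ hσ
  rcases List.mem_map.1 hσ with ⟨t, htm, rfl⟩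
  have ht := List.mem_range.1 htm
  exact Equiv.swap_apply_of_ne_of_ne (by omega) (by omega)

lemma sigmaPerm_fix' {i j x : ℕ} (h : x ∉ Finset.Icc (i - j) (i + j + 1)) : sigmaPerm i j x = x := by
  rw [Finset.mem_Icc] at h
  exact sigmaPerm_fix (by omega)

lemma sigmaPerm_up {i j x : ℕ} (hji : j < i) (h1 : i - j ≤ x) (h2 : x ≤ i) :
    sigmaPerm i j x = x + j + 1 := by
  have hmem := sigma_swap_mem (i := i) (j := j) (t := x - (i - j)) (by omega)
  have heq : i - j + (x - (i - j)) = x := by omega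
  have := prod_apply_of_mem _ (sigma_list_pairwise i j hji) _ hmem x
    (by rw [heq, Equiv.swap_apply_left]; omega)
  rw [sigmaPerm_def, this, heq, Equiv.swap_apply_left]; omega

lemma sigmaPerm_down {i j x : ℕ} (hji : j < i) (h1 : i + 1 ≤ x) (h2 : x ≤ i + j + 1) :
    sigmaPerm i j x = x - (j + 1) := by
  have hmem := sigma_swap_mem (i := i) (j := j) (t := x - (i + 1)) (by omega)
  have heq : i + (x - (i + 1)) + 1 = x := by omega
  have := prod_apply_of_mem _ (sigma_list_pairwise i j hji) _ hmem x
    (by rw [heq, Equiv.swap_apply_right]; omega)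
  rw [sigmaPerm_def, this, heq, Equiv.swap_apply_right]; omega

lemma sigmaPerm_moves {i j x : ℕ} (hji : j < i) (h : x ∈ Finset.Icc (i - j) (i + j + 1)) :
    sigmaPerm i j x ≠ x := by
  rw [Finset.mem_Icc] at h
  rcases Nat.lt_or_ge x (i + 1) with hx | hx
  · rw [sigmaPerm_up hji h.1 (by omega)]; omega
  · rw [sigmaPerm_down hji hx h.2]; omega


def fP (P : Finset ℕ) : ℕ → ℕ := fun k => if k ∈ P then k + 1 else if k - 1 ∈ P then k - 1 else k

section WP
variable {P : Finset ℕ} (h0 : 0 ∉ P) (hgap : ∀ p ∈ P, p + 1 ∉ P)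

lemma fP_mem {k : ℕ} (hk : k ∈ P) : fP P k = k + 1 := by simp [fP, hk]

lemma fP_mem' {k : ℕ} (hk : k - 1 ∈ P) (hk' : k ∉ P) : fP P k = k - 1 := by
  simp [fP, hk, hk']

lemma fP_not {k : ℕ} (hk : k ∉ P) (hk' : k - 1 ∉ P) : fP P k = k := by simp [fP, hk, hk']

include h0 hgap in
lemma fP_invol : Function.Involutive (fP P) := by
  intro k
  by_cases hk : k ∈ P
  · rw [fP_mem hk, fP_mem' (by simpa using hk) (hgap k hk)]; omega
  · by_cases hk' : k - 1 ∈ P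
    · have hk1 : 1 ≤ k := by
        rcases Nat.eq_zero_or_pos k with rfl | h; · exact absurd hk' h0
        · exact h
      rw [fP_mem' hk' hk, fP_mem hk']
      omega
    · rw [fP_not hk hk', fP_not hk hk']

noncomputable def wP (P : Finset ℕ) (h0 : 0 ∉ P) (hgap : ∀ p ∈ P, p + 1 ∉ P) : Equiv.Perm ℕ :=
  Function.Involutive.toPerm (fP P) (fP_invol h0 hgap)

lemma wP_apply (k : ℕ) : wP P h0 hgap k = fP P k := rfl

lemma wP_mul_self : wP P h0 hgap * wP P h0 hgap = 1 := by
  ext k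
  simp only [Equiv.Perm.mul_apply, wP_apply, Equiv.Perm.one_apply]
  exact fP_invol h0 hgap k

lemma wP_supp : {k : ℕ | wP P h0 hgap k ≠ k} = ↑(P ∪ P.image (· + 1)) := by
  ext k
  simp only [Set.mem_setOf_eq, coe_union, Set.mem_union, mem_coe, mem_image, wP_apply]
  constructor
  · intro h
    by_cases hk : k ∈ P
    · exact Or.inl hk
    · by_cases hk' : k - 1 ∈ P
      · refine Or.inr ⟨k - 1, hk', ?_⟩
        have : k ≠ 0 := by rintro rfl; exact h0 hk'
        omega
      · exact absurd (fP_not hk hk') h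
  · rintro (hk | ⟨p, hp, rfl⟩)
    · rw [fP_mem hk]; omega
    · rw [fP_mem' (by simpa using hp) (hgap p hp)]; omega

include hgap in
lemma wP_supp_card : (P ∪ P.image (· + 1)).card = 2 * P.card := by
  rw [Finset.card_union_of_disjoint, Finset.card_image_of_injective _ (fun a b => by omega)]
  · ring
  · rw [Finset.disjoint_right]
    rintro x hx
    rcases Finset.mem_image.1 hx with ⟨p, hp, rfl⟩
    exact hgap p hp

lemma wP_displacement (k : ℕ) : wP P h0 hgap k ≤ k + 1 ∧ k ≤ wP P h0 hgap k + 1 := by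
  rw [wP_apply]
  by_cases hk : k ∈ P
  · rw [fP_mem hk]; omega
  · by_cases hk' : k - 1 ∈ P
    · rw [fP_mem' hk' hk]; omega
    · rw [fP_not hk hk']; omega

lemma wP_inj {P' : Finset ℕ} (h0' : 0 ∉ P') (hgap' : ∀ p ∈ P', p + 1 ∉ P')
    (h : wP P h0 hgap = wP P' h0' hgap') : P = P' := by
  have key : ∀ (Q R : Finset ℕ) (hq : 0 ∉ Q) (hgq : ∀ p ∈ Q, p + 1 ∉ Q)
      (hr : 0 ∉ R) (hgr : ∀ p ∈ R, p + 1 ∉ R),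
      wP Q hq hgq = wP R hr hgr → ∀ x ∈ Q, x ∈ R := by
    intro Q R hq hgq hr hgr heq x hx
    have h1 : wP Q hq hgq x = x + 1 := by rw [wP_apply, fP_mem hx]
    by_contra hxR
    rw [heq, wP_apply] at h1
    by_cases h2 : x - 1 ∈ R
    · rw [fP_mem' h2 hxR] at h1; omega
    · rw [fP_not hxR h2] at h1; omega
  ext x
  exact ⟨fun hx => key P P' h0 hgap h0' hgap' h x hx,
    fun hx => key P' P h0' hgap' h0 hgap h.symm x hx⟩

end WP

lemma avoids_of_displacement (n : ℕ) (w : Equiv.Perm ℕ)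
    (h : ∀ k, w k ≤ k + 1 ∧ k ≤ w k + 1) : Avoids321 n w := by
  intro p q r _ hpq hqr _ hcon
  have h1 := h p
  have h2 := h q
  have h3 := h r
  omega

-- sigmaPerm j=0 is an adjacent swap
lemma sigmaPerm_zero (p : ℕ) : sigmaPerm p 0 = Equiv.swap p (p + 1) := by
  simp [sigmaPerm, List.range_succ]

section Gap3
variable {n : ℕ} {P : Finset ℕ} (hPn : P ⊆ Finset.Icc 1 (n - 1))
  (hgap3 : ∀ p ∈ P, ∀ q ∈ P, p < q → p + 3 ≤ q)

include hPn in
lemma gap3_zero : 0 ∉ P := fun h => by simpa using hPn h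

include hPn hgap3 in
lemma gap3_gap : ∀ p ∈ P, p + 1 ∉ P := by
  intro p hp hp1
  have := hgap3 p hp (p + 1) hp1 (by omega)
  omega

include hPn hgap3 in
lemma wP_isKostant : IsKostant n (wP P (gap3_zero hPn) (gap3_gap hPn hgap3)) := by
  classical
  refine ⟨(P.sort (· ≤ ·)).map (fun p => (p, 0)), ?_, ?_, ?_⟩
  · rintro ⟨p, j⟩ hp
    rcases List.mem_map.1 hp with ⟨q, hq, hqe⟩
    obtain ⟨rfl, rfl⟩ : q = p ∧ j = 0 := by
      rw [Prod.mk.injEq] at hqe; exact ⟨hqe.1, hqe.2.symm⟩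
    have := hPn ((Finset.mem_sort _).1 hq)
    rw [Finset.mem_Icc] at this
    exact ⟨this.1, this.2, Nat.zero_le _⟩
  · have hs := (Finset.sortedLT_sort P).pairwise
    have : ∀ p q : ℕ, p ∈ P → q ∈ P → p < q → Distant (p, 0) (q, 0) := by
      intro p q hp hq hpq
      have h3 := hgap3 p hp q hq hpq
      have hp1 : 1 ≤ p := by have := hPn hp; rw [Finset.mem_Icc] at this; omega
      unfold Distant extSupport
      simp only
      calc (Finset.Icc (p - 0 - 1) (p + 0 + 2) ∩ Finset.Icc (q - 0 - 1) (q + 0 + 2)).card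
          ≤ (Finset.Icc (q - 1) (p + 2)).card := by
            apply Finset.card_le_card
            intro x hx
            simp only [Finset.mem_inter, Finset.mem_Icc] at hx ⊢
            omega
        _ ≤ 1 := by rw [Nat.card_Icc]; omega
    refine List.Pairwise.map _ (fun p q h => h) ?_
    refine List.Pairwise.imp_of_mem ?_ hs
    intro p q hpl hql hpq
    exact this p q ((Finset.mem_sort _).1 hpl) ((Finset.mem_sort _).1 hql) hpq
  · -- product equality
    have hnodup : (P.sort (· ≤ ·)).Nodup := Finset.sort_nodup P _
    have hsort := (Finset.sortedLT_sort P).pairwise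
    set l := (P.sort (· ≤ ·)).map (fun p => sigmaPerm p 0) with hl
    have hl2 : l = (P.sort (· ≤ ·)).map (fun p => Equiv.swap p (p + 1)) := by
      rw [hl]; exact List.map_congr_left (fun p _ => sigmaPerm_zero p)
    have hpairP : (P.sort (· ≤ ·)).Pairwise (fun p q => p + 3 ≤ q) := by
      refine List.Pairwise.imp_of_mem ?_ hsort
      intro p q hpl hql hpq
      exact hgap3 p ((Finset.mem_sort _).1 hpl) q ((Finset.mem_sort _).1 hql) hpq
    have hpair : l.Pairwise Equiv.Perm.Disjoint := by
      rw [hl2]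
      exact List.Pairwise.map _
        (fun p q h => swap_disjoint_swap (by omega) (by omega) (by omega) (by omega)) hpairP
    have hmapeq : (((P.sort (· ≤ ·)).map (fun p => (p, 0))).map
        (fun p : ℕ × ℕ => sigmaPerm p.1 p.2)) = l := by
      rw [hl, List.map_map]; rfl
    rw [hmapeq]
    ext x
    rw [hl2] at hpair ⊢
    by_cases hx : x ∈ P
    · have hmem : Equiv.swap x (x + 1) ∈ (P.sort (· ≤ ·)).map (fun p => Equiv.swap p (p + 1)) :=
        List.mem_map.2 ⟨x, (Finset.mem_sort _).2 hx, rfl⟩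
      rw [prod_apply_of_mem _ hpair _ hmem x (by rw [Equiv.swap_apply_left]; omega)]
      rw [Equiv.swap_apply_left, wP_apply, fP_mem hx]
    · by_cases hx' : x - 1 ∈ P
      · have hx1 : 1 ≤ x := by
          rcases Nat.eq_zero_or_pos x with rfl | h
          · exact absurd hx' (gap3_zero hPn)
          · exact h
        have hmem : Equiv.swap (x - 1) x ∈ (P.sort (· ≤ ·)).map (fun p => Equiv.swap p (p + 1)) := by
          refine List.mem_map.2 ⟨x - 1, (Finset.mem_sort _).2 hx', ?_⟩
          congr 1
          omega
        rw [prod_apply_of_mem _ hpair _ hmem x (by rw [Equiv.swap_apply_right]; omega)]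
        rw [Equiv.swap_apply_right, wP_apply, fP_mem' hx' hx]
      · rw [prod_apply_of_fixed, wP_apply, fP_not hx hx']
        intro σ hσ
        rcases List.mem_map.1 hσ with ⟨p, hpl, rfl⟩
        have hpP := (Finset.mem_sort _).1 hpl
        refine Equiv.swap_apply_of_ne_of_ne (fun h => hx (h ▸ hpP)) (fun h => ?_)
        apply hx'
        have : x - 1 = p := by omega
        rw [this]; exact hpP

end Gap3

-- § Structure of 321-avoiding involutions
noncomputable def Pset (n : ℕ) (w : Equiv.Perm ℕ) : Finset ℕ :=
  (Finset.Icc 1 n).filter (fun k => k < w k)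

noncomputable def Qset (n : ℕ) (w : Equiv.Perm ℕ) : Finset ℕ :=
  (Finset.Icc 1 n).filter (fun k => w k < k)

noncomputable def Dset (n : ℕ) (w : Equiv.Perm ℕ) : Finset (ℕ × ℕ) :=
  (Pset n w).image (fun k => (k, w k - k))

section MiaStruct
variable {n a : ℕ} {w : Equiv.Perm ℕ} (hinv : IsInvolutionOn n w)

include hinv in
lemma invOn_apply : ∀ k, w (w k) = k := by
  intro k
  have := hinv.2
  rw [Equiv.ext_iff] at this
  have := this k
  simpa [Equiv.Perm.mul_apply] using this

include hinv in
lemma moved_mem {k : ℕ} (h : w k ≠ k) : 1 ≤ k ∧ k ≤ n := hinv.1 k h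

include hinv in
lemma moved_mem' {k : ℕ} (h : w k ≠ k) : 1 ≤ w k ∧ w k ≤ n := by
  have h2 : w (w k) = k := invOn_apply hinv k
  refine hinv.1 (w k) ?_
  rw [h2]
  exact fun hc => h hc.symm

include hinv in
lemma mem_Pset {k : ℕ} : k ∈ Pset n w ↔ k < w k := by
  rw [Pset, Finset.mem_filter, Finset.mem_Icc]
  refine ⟨fun h => h.2, fun h => ⟨?_, h⟩⟩
  exact moved_mem hinv (by omega)

include hinv in
lemma mem_Qset {k : ℕ} : k ∈ Qset n w ↔ w k < k := by
  rw [Qset, Finset.mem_filter, Finset.mem_Icc]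
  refine ⟨fun h => h.2, fun h => ⟨?_, h⟩⟩
  exact moved_mem hinv (by omega)

include hinv in
lemma supp_eq_PQ : {k : ℕ | w k ≠ k} = ↑(Pset n w ∪ Qset n w) := by
  ext k
  simp only [Set.mem_setOf_eq, Finset.coe_union, Set.mem_union, Finset.mem_coe,
    mem_Pset hinv, mem_Qset hinv]
  omega

include hinv in
lemma Qset_eq_image : Qset n w = (Pset n w).image (fun k => w k) := by
  ext q
  rw [mem_Qset hinv, Finset.mem_image]
  constructor
  · intro h
    refine ⟨w q, ?_, invOn_apply hinv q⟩
    rw [mem_Pset hinv, invOn_apply hinv q]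
    exact h
  · rintro ⟨p, hp, rfl⟩
    rw [mem_Pset hinv] at hp
    rw [invOn_apply hinv p]
    exact hp

include hinv in
lemma Pset_card (hsupp : Set.ncard {k : ℕ | w k ≠ k} = 2 * a) : (Pset n w).card = a := by
  have h1 : {k : ℕ | w k ≠ k}.ncard = (Pset n w ∪ Qset n w).card := by
    rw [supp_eq_PQ hinv, Set.ncard_coe_finset]
  have hdisj : Disjoint (Pset n w) (Qset n w) := by
    rw [Finset.disjoint_left]
    intro k hk hk'
    rw [mem_Pset hinv] at hk
    rw [mem_Qset hinv] at hk'
    omega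
  have h2 : (Pset n w ∪ Qset n w).card = (Pset n w).card + (Qset n w).card :=
    Finset.card_union_of_disjoint hdisj
  have h3 : (Qset n w).card = (Pset n w).card := by
    rw [Qset_eq_image hinv]
    exact Finset.card_image_of_injective _ w.injective
  omega

include hinv in
lemma mem_Dset {k d : ℕ} : (k, d) ∈ Dset n w ↔ k < w k ∧ d = w k - k := by
  rw [Dset, Finset.mem_image]
  constructor
  · rintro ⟨p, hp, hpe⟩
    rw [Prod.mk.injEq] at hpe
    obtain ⟨rfl, rfl⟩ := hpe
    exact ⟨(mem_Pset hinv).1 hp, rfl⟩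
  · rintro ⟨h1, rfl⟩
    exact ⟨k, (mem_Pset hinv).2 h1, rfl⟩

include hinv in
lemma Dset_card : (Dset n w).card = (Pset n w).card :=
  Finset.card_image_of_injective _ (fun x y hxy => by
    rw [Prod.mk.injEq] at hxy; exact hxy.1)

include hinv in
lemma Dset_inj {w' : Equiv.Perm ℕ} (hinv' : IsInvolutionOn n w')
    (h : Dset n w = Dset n w') : w = w' := by
  have key : ∀ k, k < w k → w' k = w k := by
    intro k hk
    have h1 : (k, w k - k) ∈ Dset n w := (mem_Dset hinv).2 ⟨hk, rfl⟩
    rw [h, mem_Dset hinv'] at h1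
    omega
  have key' : ∀ k, k < w' k → w k = w' k := by
    intro k hk
    have h1 : (k, w' k - k) ∈ Dset n w' := (mem_Dset hinv').2 ⟨hk, rfl⟩
    rw [← h, mem_Dset hinv] at h1
    omega
  ext k
  rcases lt_trichotomy k (w k) with h1 | h1 | h1
  · exact (key k h1).symm
  · -- w k = k; show w' k = k
    by_contra hne
    rcases Nat.lt_or_ge k (w' k) with h2 | h2
    · have := key' k h2; omega
    · have h3 : w' (w' k) = k := invOn_apply hinv' k
      have h4 : w' k < w' (w' k) := by omega
      have := key' (w' k) (by omega)
      rw [h3] at this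
      have h5 : w (w' k) = k := this
      have : w' k = w k := by
        have := invOn_apply hinv k
        calc w' k = w (w (w' k)) := (invOn_apply hinv (w' k)).symm
        _ = w k := by rw [h5]
      omega
  · -- w k < k
    have h2 : w (w k) = k := invOn_apply hinv k
    have h3 : w k < w (w k) := by omega
    have h4 := key (w k) h3
    rw [h2] at h4
    have : w' (w' (w k)) = w k := invOn_apply hinv' (w k)
    rw [h4] at this
    rw [this]

include hinv in
lemma no_fixed_under (havoid : Avoids321 n w) {p x : ℕ} (hp : p < w p) (h1 : p < x)
    (h2 : x < w p) : w x ≠ x := by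
  intro hfix
  have hpmem := moved_mem hinv (k := p) (by omega)
  have hpmem' := moved_mem' hinv (k := p) (by omega)
  have := havoid p x (w p) hpmem.1 h1 h2 hpmem'.2
  apply this
  constructor
  · omega
  · rw [invOn_apply hinv p, hfix]; omega

include hinv in
lemma d_le (havoid : Avoids321 n w) (hsupp : Set.ncard {k : ℕ | w k ≠ k} = 2 * a)
    {k d : ℕ} (hkd : (k, d) ∈ Dset n w) : 1 ≤ d ∧ d + 1 ≤ 2 * a := by
  rw [mem_Dset hinv] at hkd
  obtain ⟨hk, rfl⟩ := hkd
  refine ⟨by omega, ?_⟩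
  have hsub : Finset.Icc k (w k) ⊆ Pset n w ∪ Qset n w := by
    intro x hx
    rw [Finset.mem_Icc] at hx
    rw [Finset.mem_union, mem_Pset hinv, mem_Qset hinv]
    rcases Nat.lt_or_ge x (w x) with h | h
    · exact Or.inl h
    · rcases Nat.eq_or_lt_of_le h with h' | h'
      · -- w x = x: impossible unless x = k or x = w k, but those are moved
        exfalso
        rcases Nat.eq_or_lt_of_le hx.1 with rfl | hx1
        · omega
        · rcases Nat.eq_or_lt_of_le hx.2 with hx2 | hx2
          · have : w (w k) = k := invOn_apply hinv k
            rw [← hx2] at this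
            omega
          · exact no_fixed_under hinv havoid hk hx1 hx2 h'
      · exact Or.inr h'
  have hcard := Finset.card_le_card hsub
  rw [Nat.card_Icc] at hcard
  have h2a : (Pset n w ∪ Qset n w).card = 2 * a := by
    rw [← Set.ncard_coe_finset, ← supp_eq_PQ hinv, hsupp]
  omega

include hinv in
lemma descent (havoid : Avoids321 n w) (h : ∃ k, k + 2 ≤ w k) :
    ∃ p, p < w p ∧ p + 1 < w (p + 1) := by
  classical
  set p := Nat.find h with hpdef
  have hp : p + 2 ≤ w p := Nat.find_spec h
  have hplt : p < w p := by omega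
  have hx := no_fixed_under hinv havoid hplt (x := p + 1) (by omega) (by omega)
  rcases Nat.lt_or_ge (p + 1) (w (p + 1)) with hgt | hlt
  · exact ⟨p, hplt, hgt⟩
  · exfalso
    have hlt' : w (p + 1) < p + 1 := by omega
    set q := w (p + 1) with hq
    have hwq : w q = p + 1 := invOn_apply hinv (p + 1)
    have hqp : q ≠ p := by
      intro hqe
      rw [hqe] at hwq
      omega
    have hq2 : q + 2 ≤ w q := by omega
    exact Nat.find_min h (m := q) (by omega) hq2

end MiaStruct

-- § Structure of Kostant involutions
def suppIcc (p : ℕ × ℕ) : Finset ℕ := Finset.Icc (p.1 - p.2) (p.1 + p.2 + 1)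

lemma params_facts {n : ℕ} {p : ℕ × ℕ} (h : SpecialParams n p.1 p.2) :
    p.2 < p.1 ∧ 1 ≤ p.1 ∧ p.1 + p.2 + 1 ≤ n := by
  obtain ⟨h1, h2, h3⟩ := h
  rw [Nat.le_min] at h3
  omega

lemma distant_symm : Symmetric Distant := by
  intro p q h
  unfold Distant at *
  rwa [Finset.inter_comm]

lemma distant_ne {p q : ℕ × ℕ} (h : Distant p q) : p ≠ q := by
  rintro rfl
  unfold Distant extSupport at h
  rw [Finset.inter_self, Nat.card_Icc] at h
  omega

lemma mem_extSupport_of_mem_suppIcc {p : ℕ × ℕ} {x : ℕ} (h : x ∈ suppIcc p) :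
    x ∈ extSupport p.1 p.2 ∧ x + 1 ∈ extSupport p.1 p.2 := by
  rw [suppIcc, Finset.mem_Icc] at h
  rw [extSupport, Finset.mem_Icc, Finset.mem_Icc]
  omega

lemma distant_disjoint {p q : ℕ × ℕ} (h : Distant p q) :
    Disjoint (suppIcc p) (suppIcc q) := by
  rw [Finset.disjoint_left]
  intro x hx hx'
  have h1 := mem_extSupport_of_mem_suppIcc hx
  have h2 := mem_extSupport_of_mem_suppIcc hx'
  have hsub : ({x, x + 1} : Finset ℕ) ⊆ extSupport p.1 p.2 ∩ extSupport q.1 q.2 := by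
    intro y hy
    rw [Finset.mem_insert, Finset.mem_singleton] at hy
    rw [Finset.mem_inter]
    rcases hy with rfl | rfl
    · exact ⟨h1.1, h2.1⟩
    · exact ⟨h1.2, h2.2⟩
  have hc : ({x, x + 1} : Finset ℕ).card = 2 := by
    rw [Finset.card_insert_of_notMem (by simp), Finset.card_singleton]
  have := Finset.card_le_card hsub
  rw [hc] at this
  unfold Distant at h
  omega

lemma sigma_disjoint_of_distant {n : ℕ} {p q : ℕ × ℕ} (hp : SpecialParams n p.1 p.2)
    (hq : SpecialParams n q.1 q.2) (h : Distant p q) :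
    (sigmaPerm p.1 p.2).Disjoint (sigmaPerm q.1 q.2) := by
  intro x
  by_cases hx : sigmaPerm p.1 p.2 x = x
  · exact Or.inl hx
  · right
    apply sigmaPerm_fix'
    intro hmem
    have hxp : x ∈ suppIcc p := by
      by_contra hne
      exact hx (sigmaPerm_fix' hne)
    exact (Finset.disjoint_left.1 (distant_disjoint h)) hxp hmem

section KostantStruct
variable {n a : ℕ} {L : List (ℕ × ℕ)} (hparams : ∀ p ∈ L, SpecialParams n p.1 p.2)
  (hdist : L.Pairwise Distant)

include hparams hdist in
lemma Lsigma_pairwise :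
    (L.map (fun p => sigmaPerm p.1 p.2)).Pairwise Equiv.Perm.Disjoint := by
  have hdist' : L.Pairwise (fun p q => Distant p q ∧ SpecialParams n p.1 p.2 ∧
      SpecialParams n q.1 q.2) := by
    refine List.Pairwise.imp_of_mem ?_ hdist
    intro p q hpl hql hpq
    exact ⟨hpq, hparams p hpl, hparams q hql⟩
  exact List.Pairwise.map _
    (fun p q h => sigma_disjoint_of_distant h.2.1 h.2.2 h.1) hdist'

include hdist in
lemma L_nodup : L.Nodup := List.Pairwise.imp distant_ne hdist

include hparams hdist in
lemma kostant_supp {w : Equiv.Perm ℕ}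
    (hw : w = (L.map (fun p => sigmaPerm p.1 p.2)).prod) :
    {x : ℕ | w x ≠ x} = ↑(L.toFinset.biUnion suppIcc) := by
  classical
  ext x
  have hiff : (x ∈ (↑(L.toFinset.biUnion suppIcc) : Set ℕ)) ↔ ∃ p ∈ L, x ∈ suppIcc p := by
    rw [Finset.mem_coe, Finset.mem_biUnion]
    simp only [List.mem_toFinset]
  rw [Set.mem_setOf_eq, hiff]
  constructor
  · intro h
    by_contra hcon
    push_neg at hcon
    apply h
    rw [hw]
    apply prod_apply_of_fixed
    intro σ hσ
    rcases List.mem_map.1 hσ with ⟨p, hpl, rfl⟩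
    apply sigmaPerm_fix'
    exact fun hmem => (hcon p hpl) hmem
  · rintro ⟨p, hpl, hmem⟩
    have hpf := params_facts (hparams p hpl)
    have hmoves : sigmaPerm p.1 p.2 x ≠ x := by
      apply sigmaPerm_moves hpf.1
      rw [suppIcc] at hmem
      exact hmem
    rw [hw, prod_apply_of_mem _ (Lsigma_pairwise hparams hdist) _
      (List.mem_map.2 ⟨p, hpl, rfl⟩) x hmoves]
    exact hmoves

include hparams hdist in
lemma kostant_supp_card :
    (L.toFinset.biUnion suppIcc).card = ∑ p ∈ L.toFinset, (2 * p.2 + 2) := by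
  classical
  rw [Finset.card_biUnion]
  · apply Finset.sum_congr rfl
    intro p hp
    have hpf := params_facts (hparams p (List.mem_toFinset.1 hp))
    rw [suppIcc, Nat.card_Icc]
    omega
  · intro p hp q hq hpq
    exact distant_disjoint ((haveI : Std.Symm Distant := ⟨fun _ _ h => distant_symm h⟩; List.Pairwise.forall hdist)
      (List.mem_toFinset.1 hp) (List.mem_toFinset.1 hq) hpq)

end KostantStruct

lemma kostant_prod_eq {n : ℕ} {L L' : List (ℕ × ℕ)}
    (hparams : ∀ p ∈ L, SpecialParams n p.1 p.2) (hdist : L.Pairwise Distant)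
    (hdist' : L'.Pairwise Distant)
    (h : L.toFinset = L'.toFinset) :
    (L.map (fun p => sigmaPerm p.1 p.2)).prod = (L'.map (fun p => sigmaPerm p.1 p.2)).prod := by
  classical
  have hperm : L.Perm L' :=
    List.perm_of_nodup_nodup_toFinset_eq (L_nodup hdist) (L_nodup hdist') h
  refine List.Perm.prod_eq' (hperm.map _) ?_
  exact (Lsigma_pairwise hparams hdist).imp (fun h => Equiv.Perm.Disjoint.commute h)

-- § Rank lemmas
lemma rank_lt {Q : Finset ℕ} {x y : ℕ} (hx : x ∈ Q) (hxy : x < y) :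
    (Q.filter (· < x)).card < (Q.filter (· < y)).card := by
  apply Finset.card_lt_card
  have hsub : Q.filter (· < x) ⊆ Q.filter (· < y) := by
    intro z hz
    rw [Finset.mem_filter] at hz ⊢
    exact ⟨hz.1, by omega⟩
  refine (Finset.ssubset_iff_of_subset hsub).2 ⟨x, Finset.mem_filter.2 ⟨hx, hxy⟩, fun hc => ?_⟩
  have := (Finset.mem_filter.1 hc).2
  omega

lemma rank_inj {Q : Finset ℕ} {x y : ℕ} (hx : x ∈ Q) (hy : y ∈ Q)
    (h : (Q.filter (· < x)).card = (Q.filter (· < y)).card) : x = y := by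
  rcases lt_trichotomy x y with hlt | he | hlt
  · have := rank_lt hx hlt; omega
  · exact he
  · have := rank_lt hy hlt; omega

lemma rank_fst_lt {Q : Finset (ℕ × ℕ)} {u y : ℕ × ℕ} (hu : u ∈ Q) (hxy : u.1 < y.1) :
    (Q.filter (fun v => v.1 < u.1)).card < (Q.filter (fun v => v.1 < y.1)).card := by
  apply Finset.card_lt_card
  have hsub : Q.filter (fun v => v.1 < u.1) ⊆ Q.filter (fun v => v.1 < y.1) := by
    intro z hz
    rw [Finset.mem_filter] at hz ⊢
    exact ⟨hz.1, by omega⟩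
  refine (Finset.ssubset_iff_of_subset hsub).2 ⟨u, Finset.mem_filter.2 ⟨hu, hxy⟩, fun hc => ?_⟩
  have := (Finset.mem_filter.1 hc).2
  omega

lemma rank_fst_inj {Q : Finset (ℕ × ℕ)} (hfst : ∀ u ∈ Q, ∀ v ∈ Q, u.1 = v.1 → u = v)
    {u v : ℕ × ℕ} (hu : u ∈ Q) (hv : v ∈ Q)
    (h : (Q.filter (fun z => z.1 < u.1)).card = (Q.filter (fun z => z.1 < v.1)).card) :
    u = v := by
  rcases lt_trichotomy u.1 v.1 with hlt | he | hlt
  · have := rank_fst_lt hu hlt; omega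
  · exact hfst u hu v hv he
  · have := rank_fst_lt hv hlt; omega

-- § The spread families
open Classical in
noncomputable def GSet (N a g : ℕ) : Finset (Finset ℕ) :=
  ((Finset.Icc 1 N).powersetCard a).filter
    (fun P => ∀ p ∈ P, ∀ q ∈ P, p < q → p + g ≤ q)

open Classical in
noncomputable def BadSet (N a g : ℕ) : Finset (Finset ℕ) :=
  ((Finset.Icc 1 N).powersetCard a).filter
    (fun P => ∃ p ∈ P, ∃ q ∈ P, p < q ∧ q < p + g)

lemma bad_card (N a g : ℕ) (ha : 1 ≤ a) :
    (BadSet N a g).card ≤ N.choose (a - 1) * (a * g) := by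
  classical
  set T := ((Finset.Icc 1 N).powersetCard (a - 1)) ×ˢ (Finset.range a ×ˢ Finset.range g)
    with hT
  have hTcard : T.card = N.choose (a - 1) * (a * g) := by
    rw [hT, Finset.card_product, Finset.card_product, Finset.card_powersetCard,
      Nat.card_Icc, Finset.card_range, Finset.card_range, Nat.add_sub_cancel]
  rw [← hTcard]
  -- witnesses
  set p0 := fun P : Finset ℕ => sInf {p : ℕ | p ∈ P ∧ ∃ q ∈ P, p < q ∧ q < p + g} with hp0
  set q0 := fun P : Finset ℕ => sInf {q : ℕ | q ∈ P ∧ p0 P < q ∧ q < p0 P + g} with hq0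
  have hwit : ∀ P ∈ BadSet N a g, p0 P ∈ P ∧ q0 P ∈ P ∧ p0 P < q0 P ∧ q0 P < p0 P + g := by
    intro P hP
    rw [BadSet, Finset.mem_filter] at hP
    obtain ⟨-, p, hp, q, hq, h1, h2⟩ := hP
    have hp0m : p0 P ∈ {p : ℕ | p ∈ P ∧ ∃ q ∈ P, p < q ∧ q < p + g} :=
      Nat.sInf_mem ⟨p, hp, q, hq, h1, h2⟩
    obtain ⟨hp0P, q', hq', hq'1, hq'2⟩ := hp0m
    have hq0m : q0 P ∈ {q : ℕ | q ∈ P ∧ p0 P < q ∧ q < p0 P + g} :=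
      Nat.sInf_mem ⟨q', hq', hq'1, hq'2⟩
    exact ⟨hp0P, hq0m.1, hq0m.2.1, hq0m.2.2⟩
  apply Finset.card_le_card_of_injOn
    (fun P => (P.erase (q0 P),
      (((P.erase (q0 P)).filter (· < p0 P)).card, q0 P - p0 P - 1)))
  · intro P hP
    obtain ⟨hp0P, hq0P, h1, h2⟩ := hwit P hP
    rw [Finset.mem_coe, BadSet, Finset.mem_filter, Finset.mem_powersetCard] at hP
    obtain ⟨⟨hsub, hcard⟩, -⟩ := hP
    rw [Finset.mem_coe, hT, Finset.mem_product, Finset.mem_product]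
    dsimp only
    refine ⟨?_, ?_, ?_⟩
    · rw [Finset.mem_powersetCard]
      constructor
      · exact (Finset.erase_subset _ _).trans hsub
      · rw [Finset.card_erase_of_mem hq0P, hcard]
    · rw [Finset.mem_range]
      have hle : ((P.erase (q0 P)).filter (· < p0 P)).card ≤ (P.erase (q0 P)).card :=
        Finset.card_filter_le _ _
      rw [Finset.card_erase_of_mem hq0P, hcard] at hle
      omega
    · rw [Finset.mem_range]; omega
  · intro P hP P' hP' heq
    simp only [Prod.mk.injEq] at heq
    obtain ⟨hQ, hr, hc⟩ := heq
    obtain ⟨hp0P, hq0P, h1, h2⟩ := hwit P (by simpa using hP)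
    obtain ⟨hp0P', hq0P', h1', h2'⟩ := hwit P' (by simpa using hP')
    have hpmem : p0 P ∈ P.erase (q0 P) := Finset.mem_erase.2 ⟨by omega, hp0P⟩
    have hpmem' : p0 P' ∈ P'.erase (q0 P') := Finset.mem_erase.2 ⟨by omega, hp0P'⟩
    rw [← hQ] at hpmem'
    have hpe : p0 P = p0 P' := rank_inj hpmem hpmem' (by rw [hr, hQ])
    have hqe : q0 P = q0 P' := by omega
    calc P = insert (q0 P) (P.erase (q0 P)) := (Finset.insert_erase hq0P).symm
      _ = insert (q0 P') (P'.erase (q0 P')) := by rw [hQ, hqe]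
      _ = P' := Finset.insert_erase hq0P'

lemma GSet_card_lower (N a g : ℕ) (ha : 1 ≤ a) :
    N.choose a ≤ (GSet N a g).card + N.choose (a - 1) * (a * g) := by
  classical
  have hsub : (Finset.Icc 1 N).powersetCard a ⊆ GSet N a g ∪ BadSet N a g := by
    intro P hP
    rw [Finset.mem_union, GSet, BadSet, Finset.mem_filter, Finset.mem_filter]
    by_cases h : ∀ p ∈ P, ∀ q ∈ P, p < q → p + g ≤ q
    · exact Or.inl ⟨hP, h⟩
    · push_neg at h
      obtain ⟨p, hp, q, hq, h1, h2⟩ := h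
      exact Or.inr ⟨hP, p, hp, q, hq, h1, by omega⟩
  have h1 := Finset.card_le_card hsub
  have h2 := Finset.card_union_le (GSet N a g) (BadSet N a g)
  have h3 := bad_card N a g ha
  have h4 : ((Finset.Icc 1 N).powersetCard a).card = N.choose a := by
    rw [Finset.card_powersetCard, Nat.card_Icc, Nat.add_sub_cancel]
  omega

-- § The sets being counted
def KSet (n a : ℕ) : Set (Equiv.Perm ℕ) :=
  {w : Equiv.Perm ℕ | IsKostant n w ∧ Set.ncard {k : ℕ | w k ≠ k} = 2 * a}

def MSet (n a : ℕ) : Set (Equiv.Perm ℕ) :=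
  {w : Equiv.Perm ℕ |
    IsInvolutionOn n w ∧ Avoids321 n w ∧ Set.ncard {k : ℕ | w k ≠ k} = 2 * a}

noncomputable def kiN (n a : ℕ) : ℕ := Set.ncard (KSet n a)
noncomputable def miaN (n a : ℕ) : ℕ := Set.ncard (MSet n a)

-- § facts about GSet members
lemma GSet_facts {N a g : ℕ} {P : Finset ℕ} (h : P ∈ GSet N a g) :
    P ⊆ Finset.Icc 1 N ∧ P.card = a ∧ (∀ p ∈ P, ∀ q ∈ P, p < q → p + g ≤ q) := by
  rw [GSet, Finset.mem_filter, Finset.mem_powersetCard] at h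
  exact ⟨h.1.1, h.1.2, h.2⟩

lemma GSet_zero_not_mem {N a g : ℕ} {P : Finset ℕ} (h : P ∈ GSet N a g) : 0 ∉ P := by
  intro h0
  have := (GSet_facts h).1 h0
  rw [Finset.mem_Icc] at this
  omega

lemma GSet_gap {N a g : ℕ} (hg : 2 ≤ g) {P : Finset ℕ} (h : P ∈ GSet N a g) :
    ∀ p ∈ P, p + 1 ∉ P := by
  intro p hp hp1
  have := (GSet_facts h).2.2 p hp (p + 1) hp1 (by omega)
  omega

noncomputable def FG : Finset ℕ → Equiv.Perm ℕ := fun P =>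
  if h : 0 ∉ P ∧ ∀ p ∈ P, p + 1 ∉ P then wP P h.1 h.2 else 1

lemma FG_eq {P : Finset ℕ} (h0 : 0 ∉ P) (hgap : ∀ p ∈ P, p + 1 ∉ P) :
    FG P = wP P h0 hgap := dif_pos ⟨h0, hgap⟩

lemma FG_mem_MSet {n a g : ℕ} (hg : 2 ≤ g) {P : Finset ℕ} (h : P ∈ GSet (n - 1) a g) :
    FG P ∈ MSet n a := by
  obtain ⟨hsub, hcard, hspread⟩ := GSet_facts h
  have h0 := GSet_zero_not_mem h
  have hgap := GSet_gap hg h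
  rw [FG_eq h0 hgap]
  have hsupp : {k : ℕ | wP P h0 hgap k ≠ k} = ↑(P ∪ P.image (· + 1)) := wP_supp h0 hgap
  refine ⟨⟨?_, wP_mul_self h0 hgap⟩, ?_, ?_⟩
  · intro k hk
    have : k ∈ P ∪ P.image (· + 1) := by
      rw [← Finset.mem_coe, ← hsupp]; exact hk
    rw [Finset.mem_union, Finset.mem_image] at this
    rcases this with hk' | ⟨p, hp, rfl⟩
    · have := hsub hk'; rw [Finset.mem_Icc] at this; omega
    · have := hsub hp; rw [Finset.mem_Icc] at this; omega
  · exact avoids_of_displacement n _ (wP_displacement h0 hgap)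
  · rw [hsupp, Set.ncard_coe_finset, wP_supp_card hgap, hcard]

lemma FG_mem_KSet {n a : ℕ} {P : Finset ℕ} (h : P ∈ GSet (n - 1) a 3) :
    FG P ∈ KSet n a := by
  obtain ⟨hsub, hcard, hspread⟩ := GSet_facts h
  have h0 := GSet_zero_not_mem h
  have hgap := GSet_gap (by omega) h
  rw [FG_eq h0 hgap]
  constructor
  · exact wP_isKostant hsub hspread
  · rw [wP_supp h0 hgap, Set.ncard_coe_finset, wP_supp_card hgap, hcard]

lemma FG_injOn {N a g : ℕ} (hg : 2 ≤ g) : Set.InjOn FG ↑(GSet N a g) := by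
  intro P hP P' hP' he
  have h0 := GSet_zero_not_mem (Finset.mem_coe.1 hP)
  have hgap := GSet_gap hg (Finset.mem_coe.1 hP)
  have h0' := GSet_zero_not_mem (Finset.mem_coe.1 hP')
  have hgap' := GSet_gap hg (Finset.mem_coe.1 hP')
  rw [FG_eq h0 hgap, FG_eq h0' hgap'] at he
  exact wP_inj h0 hgap h0' hgap' he

lemma lower_aux {N a g : ℕ} (hg : 2 ≤ g) (S : Set (Equiv.Perm ℕ)) (hfin : S.Finite)
    (hmem : ∀ P ∈ GSet N a g, FG P ∈ S) : (GSet N a g).card ≤ S.ncard := by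
  have h1 : (FG '' ↑(GSet N a g)).ncard = (GSet N a g).card := by
    rw [Set.ncard_image_of_injOn (FG_injOn hg), Set.ncard_coe_finset]
  rw [← h1]
  apply Set.ncard_le_ncard _ hfin
  rintro x ⟨P, hP, rfl⟩
  exact hmem P (Finset.mem_coe.1 hP)

-- § mia upper bound
lemma Dset_fst_inj {n : ℕ} {w : Equiv.Perm ℕ} :
    ∀ u ∈ Dset n w, ∀ v ∈ Dset n w, u.1 = v.1 → u = v := by
  intro u hu v hv he
  rw [Dset, Finset.mem_image] at hu hv
  obtain ⟨k, hk, rfl⟩ := hu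
  obtain ⟨k', hk', rfl⟩ := hv
  simp only at he
  rw [he]

lemma MSet_mem_spec {n a : ℕ} {w : Equiv.Perm ℕ} (h : w ∈ MSet n a) :
    IsInvolutionOn n w ∧ Avoids321 n w ∧ Set.ncard {k : ℕ | w k ≠ k} = 2 * a := h

lemma Dset_subset {n a : ℕ} {w : Equiv.Perm ℕ} (h : w ∈ MSet n a) :
    Dset n w ⊆ Finset.Icc 1 n ×ˢ Finset.range (2 * a) := by
  obtain ⟨hinv, havoid, hsupp⟩ := h
  intro u hu
  have hu' := hu
  rw [Dset, Finset.mem_image] at hu'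
  obtain ⟨k, hk, rfl⟩ := hu'
  have hkP := hk
  rw [Pset, Finset.mem_filter] at hkP
  rw [Finset.mem_product, Finset.mem_range]
  refine ⟨hkP.1, ?_⟩
  have := d_le hinv havoid hsupp ((mem_Dset hinv).2 ⟨hkP.2, rfl⟩)
  omega

lemma Dset_card_eq {n a : ℕ} {w : Equiv.Perm ℕ} (h : w ∈ MSet n a) :
    (Dset n w).card = a := by
  obtain ⟨hinv, havoid, hsupp⟩ := h
  rw [Dset_card hinv, Pset_card hinv hsupp]

lemma MSet_finite (n a : ℕ) : (MSet n a).Finite := by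
  classical
  apply Set.Finite.of_finite_image (f := Dset n)
  · apply Set.Finite.subset (Set.finite_range
      (fun T : (Finset.Icc 1 n ×ˢ Finset.range (2 * a)).powerset => (T : Finset (ℕ × ℕ))))
    rintro x ⟨w, hw, rfl⟩
    exact ⟨⟨Dset n w, Finset.mem_powerset.2 (Dset_subset hw)⟩, rfl⟩
  · intro w hw w' hw' he
    exact Dset_inj (MSet_mem_spec hw).1 (MSet_mem_spec hw').1 he

open Classical in
lemma mia_upper (n a : ℕ) (ha : 1 ≤ a) :
    miaN n a ≤ n.choose a + (n * (2 * a)).choose (a - 1) * (a * (2 * a)) := by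
  classical
  set MA := {w ∈ MSet n a | ∀ u ∈ Dset n w, u.2 = 1} with hMA
  set MB := {w ∈ MSet n a | ¬ ∀ u ∈ Dset n w, u.2 = 1} with hMB
  have hunion : MSet n a = MA ∪ MB := by
    ext w
    rw [hMA, hMB]
    simp only [Set.mem_union, Set.mem_setOf_eq]
    by_cases h : ∀ u ∈ Dset n w, u.2 = 1
    · constructor
      · intro hw; exact Or.inl ⟨hw, h⟩
      · rintro (hw | hw) <;> exact hw.1
    · constructor
      · intro hw; exact Or.inr ⟨hw, h⟩
      · rintro (hw | hw) <;> exact hw.1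
  have hAcard : MA.ncard ≤ n.choose a := by
    have hinj : Set.InjOn (fun w => (Dset n w).image Prod.fst) MA := by
      intro w hw w' hw' he
      simp only at he
      have hrec : ∀ v ∈ MA, Dset n v =
          (((Dset n v).image Prod.fst).image (fun k => (k, 1))) := by
        intro v hv
        ext u
        rw [Finset.mem_image]
        constructor
        · intro hu
          refine ⟨u.1, Finset.mem_image_of_mem _ hu, ?_⟩
          have : u.2 = 1 := hv.2 u hu
          rw [← this]
        · rintro ⟨k, hk, rfl⟩
          rw [Finset.mem_image] at hk
          obtain ⟨u', hu', rfl⟩ := hk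
          have : u'.2 = 1 := hv.2 u' hu'
          rw [← this]
          exact hu'
      have : Dset n w = Dset n w' := by rw [hrec w hw, hrec w' hw', he]
      exact Dset_inj hw.1.1 hw'.1.1 this
    have hmaps : ∀ w ∈ MA, (Dset n w).image Prod.fst ∈
        (Finset.Icc 1 n).powersetCard a := by
      intro w hw
      rw [Finset.mem_powersetCard]
      constructor
      · intro x hx
        rw [Finset.mem_image] at hx
        obtain ⟨u, hu, rfl⟩ := hx
        have := Dset_subset hw.1 hu
        rw [Finset.mem_product] at this
        exact this.1
      · rw [Finset.card_image_of_injOn (fun u hu v hv he => Dset_fst_inj u hu v hv he),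
          Dset_card_eq hw.1]
    calc MA.ncard = ((fun w => (Dset n w).image Prod.fst) '' MA).ncard :=
        (Set.ncard_image_of_injOn hinj).symm
      _ ≤ (((Finset.Icc 1 n).powersetCard a : Finset (Finset ℕ)) : Set (Finset ℕ)).ncard := by
          apply Set.ncard_le_ncard
          · rintro x ⟨w, hw, rfl⟩
            exact Finset.mem_coe.2 (hmaps w hw)
          · exact (((Finset.Icc 1 n).powersetCard a : Finset (Finset ℕ)) : Set (Finset ℕ)).toFinite
      _ = n.choose a := by
          rw [Set.ncard_coe_finset, Finset.card_powersetCard, Nat.card_Icc, Nat.add_sub_cancel]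
  have hBcard : MB.ncard ≤ (n * (2 * a)).choose (a - 1) * (a * (2 * a)) := by
    set x0 : Equiv.Perm ℕ → ℕ := fun w => sInf {p : ℕ | p < w p ∧ p + 1 < w (p + 1)} with hx0def
    have hx0 : ∀ w ∈ MB, x0 w < w (x0 w) ∧ x0 w + 1 < w (x0 w + 1) := by
      intro w hw
      obtain ⟨⟨hinv, havoid, hsupp⟩, hne⟩ := hw
      push_neg at hne
      obtain ⟨u, hu, hu2⟩ := hne
      have hu' := (mem_Dset hinv).1 (by rwa [← Prod.mk.eta (p := u)] at hu)
      have hd := d_le hinv havoid hsupp (by rwa [← Prod.mk.eta (p := u)] at hu)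
      have hk2 : u.1 + 2 ≤ w u.1 := by omega
      have hdes := descent hinv havoid ⟨u.1, hk2⟩
      exact Nat.sInf_mem hdes
    set d0 : Equiv.Perm ℕ → ℕ := fun w => w (x0 w + 1) - (x0 w + 1) with hd0def
    set D' : Equiv.Perm ℕ → Finset (ℕ × ℕ) :=
      fun w => (Dset n w).erase (x0 w + 1, d0 w) with hD'def
    have hmem1 : ∀ w ∈ MB, (x0 w + 1, d0 w) ∈ Dset n w := by
      intro w hw
      exact (mem_Dset hw.1.1).2 ⟨(hx0 w hw).2, rfl⟩
    have hmemu0 : ∀ w ∈ MB, (x0 w, w (x0 w) - x0 w) ∈ D' w := by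
      intro w hw
      rw [hD'def, Finset.mem_erase]
      constructor
      · intro hc
        rw [Prod.mk.injEq] at hc
        omega
      · exact (mem_Dset hw.1.1).2 ⟨(hx0 w hw).1, rfl⟩
    have hd0_ge : ∀ w ∈ MB, 1 ≤ d0 w ∧ d0 w + 1 ≤ 2 * a := by
      intro w hw
      exact d_le hw.1.1 hw.1.2.1 hw.1.2.2 (hmem1 w hw)
    set T := ((Finset.Icc 1 n ×ˢ Finset.range (2 * a)).powersetCard (a - 1)) ×ˢ
      (Finset.range a ×ˢ Finset.range (2 * a)) with hTdef
    set Φ : Equiv.Perm ℕ → Finset (ℕ × ℕ) × (ℕ × ℕ) := fun w =>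
      (D' w, (((D' w).filter (fun z => z.1 < x0 w)).card, d0 w - 1)) with hΦdef
    have hmaps : ∀ w ∈ MB, Φ w ∈ T := by
      intro w hw
      rw [hΦdef, hTdef, Finset.mem_product, Finset.mem_product]
      dsimp only
      have hcardD : (D' w).card = a - 1 := by
        rw [hD'def, Finset.card_erase_of_mem (hmem1 w hw), Dset_card_eq hw.1]
      refine ⟨?_, ?_, ?_⟩
      · rw [Finset.mem_powersetCard]
        exact ⟨(Finset.erase_subset _ _).trans (Dset_subset hw.1), hcardD⟩
      · rw [Finset.mem_range]
        have := Finset.card_filter_le (D' w) (fun z => z.1 < x0 w)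
        omega
      · rw [Finset.mem_range]
        have := hd0_ge w hw
        omega
    have hinj : Set.InjOn Φ MB := by
      intro w hw w' hw' he
      rw [hΦdef] at he
      simp only [Prod.mk.injEq] at he
      obtain ⟨hQ, hr, hd⟩ := he
      have hu0 : (x0 w, w (x0 w) - x0 w) = (x0 w', w' (x0 w') - x0 w') := by
        apply rank_fst_inj (Q := D' w)
        · intro u hu v hv
          exact Dset_fst_inj u (Finset.mem_of_mem_erase hu) v (Finset.mem_of_mem_erase hv)
        · exact hmemu0 w hw
        · rw [hQ]; exact hmemu0 w' hw'
        · rw [hr, hQ]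
      have hx0e : x0 w = x0 w' := by
        have := congrArg Prod.fst hu0
        simpa using this
      have hd0e : d0 w = d0 w' := by
        have h1 := hd0_ge w hw
        have h2 := hd0_ge w' hw'
        omega
      have hDset : Dset n w = Dset n w' := by
        calc Dset n w = insert (x0 w + 1, d0 w) (D' w) :=
            (Finset.insert_erase (hmem1 w hw)).symm
          _ = insert (x0 w' + 1, d0 w') (D' w') := by rw [hQ, hx0e, hd0e]
          _ = Dset n w' := Finset.insert_erase (hmem1 w' hw')
      exact Dset_inj hw.1.1 hw'.1.1 hDset
    calc MB.ncard = (Φ '' MB).ncard := (Set.ncard_image_of_injOn hinj).symm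
      _ ≤ ((T : Finset (Finset (ℕ × ℕ) × (ℕ × ℕ))) : Set (Finset (ℕ × ℕ) × (ℕ × ℕ))).ncard := by
          apply Set.ncard_le_ncard
          · rintro x ⟨w, hw, rfl⟩
            exact Finset.mem_coe.2 (hmaps w hw)
          · exact Set.toFinite _
      _ = (n * (2 * a)).choose (a - 1) * (a * (2 * a)) := by
          rw [Set.ncard_coe_finset, hTdef, Finset.card_product, Finset.card_product,
            Finset.card_powersetCard, Finset.card_product, Nat.card_Icc,
            Finset.card_range, Finset.card_range, Nat.add_sub_cancel]
  have h1 : miaN n a = (MSet n a).ncard := rfl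
  rw [h1, hunion]
  have := Set.ncard_union_le MA MB
  omega

-- § ki upper bound
open Classical in
noncomputable def KL (n : ℕ) (w : Equiv.Perm ℕ) : List (ℕ × ℕ) :=
  if h : IsKostant n w then h.choose else []

noncomputable def KS (n : ℕ) (w : Equiv.Perm ℕ) : Finset (ℕ × ℕ) := (KL n w).toFinset

lemma KL_spec {n : ℕ} {w : Equiv.Perm ℕ} (h : IsKostant n w) :
    (∀ p ∈ KL n w, SpecialParams n p.1 p.2) ∧ (KL n w).Pairwise Distant ∧
      w = ((KL n w).map (fun p => sigmaPerm p.1 p.2)).prod := by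
  rw [KL, dif_pos h]
  exact h.choose_spec

lemma KS_inj {n : ℕ} {w w' : Equiv.Perm ℕ} (h : IsKostant n w) (h' : IsKostant n w')
    (he : KS n w = KS n w') : w = w' := by
  obtain ⟨hp, hd, hw⟩ := KL_spec h
  obtain ⟨hp', hd', hw'⟩ := KL_spec h'
  rw [hw, hw']
  exact kostant_prod_eq hp hd hd' he

lemma KS_sum {n a : ℕ} {w : Equiv.Perm ℕ} (h : w ∈ KSet n a) :
    ∑ p ∈ KS n w, (p.2 + 1) = a := by
  obtain ⟨hk, hsupp⟩ := h
  obtain ⟨hp, hd, hw⟩ := KL_spec hk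
  have h1 : {x : ℕ | w x ≠ x} = ↑((KS n w).biUnion suppIcc) := kostant_supp hp hd hw
  have h2 := kostant_supp_card hp hd
  rw [h1, Set.ncard_coe_finset] at hsupp
  rw [KS] at *
  rw [h2] at hsupp
  have h3 : ∑ p ∈ (KL n w).toFinset, (2 * p.2 + 2) = 2 * ∑ p ∈ (KL n w).toFinset, (p.2 + 1) := by
    rw [Finset.mul_sum]
    apply Finset.sum_congr rfl
    intro p _
    ring
  omega

lemma KS_fst_inj {n a : ℕ} {w : Equiv.Perm ℕ} (h : w ∈ KSet n a) :
    ∀ u ∈ KS n w, ∀ v ∈ KS n w, u.1 = v.1 → u = v := by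
  obtain ⟨hk, hsupp⟩ := h
  obtain ⟨hp, hd, hw⟩ := KL_spec hk
  intro u hu v hv he
  by_contra hne
  have hdist : Distant u v := (haveI : Std.Symm Distant := ⟨fun _ _ h => distant_symm h⟩; List.Pairwise.forall hd)
    (List.mem_toFinset.1 hu) (List.mem_toFinset.1 hv) hne
  have hdisj := distant_disjoint hdist
  have hu1 : u.1 ∈ suppIcc u := by
    have := params_facts (hp u (List.mem_toFinset.1 hu))
    rw [suppIcc, Finset.mem_Icc]
    omega
  have hv1 : u.1 ∈ suppIcc v := by
    have := params_facts (hp v (List.mem_toFinset.1 hv))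
    rw [suppIcc, Finset.mem_Icc]
    omega
  exact (Finset.disjoint_left.1 hdisj) hu1 hv1

lemma KS_subset {n a : ℕ} {w : Equiv.Perm ℕ} (h : w ∈ KSet n a) :
    KS n w ⊆ Finset.Icc 1 n ×ˢ Finset.range (a + 1) := by
  intro u hu
  have hpf := params_facts (((KL_spec h.1).1) u (List.mem_toFinset.1 hu))
  have hsum := KS_sum h
  have hle : u.2 + 1 ≤ a :=
    hsum ▸ Finset.single_le_sum (f := fun p : ℕ × ℕ => p.2 + 1) (fun p _ => by omega) hu
  rw [Finset.mem_product, Finset.mem_Icc, Finset.mem_range]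
  omega

lemma KSet_finite (n a : ℕ) : (KSet n a).Finite := by
  classical
  apply Set.Finite.of_finite_image (f := KS n)
  · apply Set.Finite.subset (Set.finite_range
      (fun T : (Finset.Icc 1 n ×ˢ Finset.range (a + 1)).powerset => (T : Finset (ℕ × ℕ))))
    rintro x ⟨w, hw, rfl⟩
    exact ⟨⟨KS n w, Finset.mem_powerset.2 (KS_subset hw)⟩, rfl⟩
  · intro w hw w' hw' he
    exact KS_inj hw.1 hw'.1 he

open Classical in
lemma ki_upper (n a : ℕ) (ha : 1 ≤ a) :
    kiN n a ≤ n.choose a + ((n + a) * (a + 1)).choose (a - 1) := by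
  classical
  set KA := {w ∈ KSet n a | (KS n w).card = a} with hKA
  set KB := {w ∈ KSet n a | (KS n w).card ≠ a} with hKB
  have hunion : KSet n a = KA ∪ KB := by
    ext w
    simp only [hKA, hKB, Set.mem_union, Set.mem_setOf_eq]
    by_cases h : (KS n w).card = a
    · exact ⟨fun hw => Or.inl ⟨hw, h⟩, fun hw => by rcases hw with hw | hw <;> exact hw.1⟩
    · exact ⟨fun hw => Or.inr ⟨hw, h⟩, fun hw => by rcases hw with hw | hw <;> exact hw.1⟩
  have hallzero : ∀ w ∈ KA, ∀ u ∈ KS n w, u.2 = 0 := by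
    intro w hw u hu
    have hsum := KS_sum hw.1
    have hcard := hw.2
    have hsplit : ∑ p ∈ KS n w, (p.2 + 1) = (∑ p ∈ KS n w, p.2) + (KS n w).card := by
      rw [Finset.sum_add_distrib, Finset.card_eq_sum_ones]
    have hzero : ∑ p ∈ KS n w, p.2 = 0 := by omega
    have := Finset.sum_eq_zero_iff.1 hzero u hu
    exact this
  have hAcard : KA.ncard ≤ n.choose a := by
    have hinj : Set.InjOn (fun w => (KS n w).image Prod.fst) KA := by
      intro w hw w' hw' he
      simp only at he
      have hrec : ∀ v ∈ KA, KS n v = (((KS n v).image Prod.fst).image (fun i => (i, 0))) := by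
        intro v hv
        ext u
        rw [Finset.mem_image]
        constructor
        · intro hu
          refine ⟨u.1, Finset.mem_image_of_mem _ hu, ?_⟩
          have : u.2 = 0 := hallzero v hv u hu
          rw [← this]
        · rintro ⟨k, hk, rfl⟩
          rw [Finset.mem_image] at hk
          obtain ⟨u', hu', rfl⟩ := hk
          have : u'.2 = 0 := hallzero v hv u' hu'
          rw [← this]
          exact hu'
      have : KS n w = KS n w' := by rw [hrec w hw, hrec w' hw', he]
      exact KS_inj hw.1.1 hw'.1.1 this
    have hmaps : ∀ w ∈ KA, (KS n w).image Prod.fst ∈ (Finset.Icc 1 n).powersetCard a := by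
      intro w hw
      rw [Finset.mem_powersetCard]
      constructor
      · intro x hx
        rw [Finset.mem_image] at hx
        obtain ⟨u, hu, rfl⟩ := hx
        have := KS_subset hw.1 hu
        rw [Finset.mem_product] at this
        exact this.1
      · rw [Finset.card_image_of_injOn (fun u hu v hv he => KS_fst_inj hw.1 u hu v hv he),
          hw.2]
    calc KA.ncard = ((fun w => (KS n w).image Prod.fst) '' KA).ncard :=
        (Set.ncard_image_of_injOn hinj).symm
      _ ≤ (((Finset.Icc 1 n).powersetCard a : Finset (Finset ℕ)) : Set (Finset ℕ)).ncard := by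
          apply Set.ncard_le_ncard
          · rintro x ⟨w, hw, rfl⟩
            exact Finset.mem_coe.2 (hmaps w hw)
          · exact Set.toFinite _
      _ = n.choose a := by
          rw [Set.ncard_coe_finset, Finset.card_powersetCard, Nat.card_Icc, Nat.add_sub_cancel]
  have hBcard : KB.ncard ≤ ((n + a) * (a + 1)).choose (a - 1) := by
    have hble : ∀ w ∈ KB, (KS n w).card + 1 ≤ a := by
      intro w hw
      have hsum := KS_sum hw.1
      have : (KS n w).card ≤ ∑ p ∈ KS n w, (p.2 + 1) := by
        rw [Finset.card_eq_sum_ones]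
        exact Finset.sum_le_sum (fun p _ => by omega)
      have hne := hw.2
      omega
    set Φ : Equiv.Perm ℕ → Finset (ℕ × ℕ) := fun w =>
      KS n w ∪ (Finset.Icc (n + 1) (n + (a - 1 - (KS n w).card))).image (fun m => (m, 0))
      with hΦ
    have hfstle : ∀ w ∈ KB, ∀ u ∈ KS n w, u.1 ≤ n := by
      intro w hw u hu
      have := KS_subset hw.1 hu
      rw [Finset.mem_product, Finset.mem_Icc] at this
      omega
    have hdisj : ∀ w ∈ KB, Disjoint (KS n w)
        ((Finset.Icc (n + 1) (n + (a - 1 - (KS n w).card))).image (fun m => (m, 0))) := by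
      intro w hw
      rw [Finset.disjoint_left]
      intro u hu hc
      rw [Finset.mem_image] at hc
      obtain ⟨m, hm, rfl⟩ := hc
      rw [Finset.mem_Icc] at hm
      have := hfstle w hw _ hu
      simp only at this
      omega
    have hrec : ∀ w ∈ KB, KS n w = (Φ w).filter (fun u => u.1 ≤ n) := by
      intro w hw
      rw [hΦ]
      ext u
      rw [Finset.mem_filter, Finset.mem_union]
      constructor
      · intro hu
        exact ⟨Or.inl hu, hfstle w hw u hu⟩
      · rintro ⟨hu | hu, hle⟩
        · exact hu
        · rw [Finset.mem_image] at hu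
          obtain ⟨m, hm, rfl⟩ := hu
          rw [Finset.mem_Icc] at hm
          simp only at hle
          omega
    have hinj : Set.InjOn Φ KB := by
      intro w hw w' hw' he
      have h1 : KS n w = KS n w' := by
        rw [hrec w hw, hrec w' hw', he]
      exact KS_inj hw.1.1 hw'.1.1 h1
    have hmaps : ∀ w ∈ KB, Φ w ∈
        (Finset.Icc 1 (n + a) ×ˢ Finset.range (a + 1)).powersetCard (a - 1) := by
      intro w hw
      rw [Finset.mem_powersetCard, hΦ]
      constructor
      · intro u hu
        rw [Finset.mem_union] at hu
        rcases hu with hu | hu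
        · have := KS_subset hw.1 hu
          rw [Finset.mem_product, Finset.mem_Icc, Finset.mem_range] at this ⊢
          omega
        · rw [Finset.mem_image] at hu
          obtain ⟨m, hm, rfl⟩ := hu
          rw [Finset.mem_Icc] at hm
          rw [Finset.mem_product, Finset.mem_Icc, Finset.mem_range]
          constructor
          · constructor <;> omega
          · omega
      · rw [Finset.card_union_of_disjoint (hdisj w hw),
          Finset.card_image_of_injective _ (fun x y hxy => by
            rw [Prod.mk.injEq] at hxy; exact hxy.1),
          Nat.card_Icc]
        have := hble w hw
        omega
    calc KB.ncard = (Φ '' KB).ncard := (Set.ncard_image_of_injOn hinj).symm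
      _ ≤ (((Finset.Icc 1 (n + a) ×ˢ Finset.range (a + 1)).powersetCard (a - 1) :
          Finset (Finset (ℕ × ℕ))) : Set (Finset (ℕ × ℕ))).ncard := by
          apply Set.ncard_le_ncard
          · rintro x ⟨w, hw, rfl⟩
            exact Finset.mem_coe.2 (hmaps w hw)
          · exact Set.toFinite _
      _ = ((n + a) * (a + 1)).choose (a - 1) := by
          rw [Set.ncard_coe_finset, Finset.card_powersetCard, Finset.card_product,
            Nat.card_Icc, Finset.card_range, Nat.add_sub_cancel]
  have h1 : kiN n a = (KSet n a).ncard := rfl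
  rw [h1, hunion]
  have := Set.ncard_union_le KA KB
  omega

-- § Assembled bounds
lemma mia_lower (n a : ℕ) (ha : 1 ≤ a) :
    (n - 1).choose a ≤ miaN n a + (n - 1).choose (a - 1) * (a * 3) := by
  have h1 := GSet_card_lower (n - 1) a 2 ha
  have h2 : (GSet (n - 1) a 2).card ≤ miaN n a :=
    lower_aux (by omega) _ (MSet_finite n a) (fun P hP => FG_mem_MSet (by omega) hP)
  have h3 : (n-1).choose (a-1) * (a * 2) ≤ (n-1).choose (a-1) * (a * 3) :=
    Nat.mul_le_mul_left _ (by omega)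
  omega

lemma ki_lower (n a : ℕ) (ha : 1 ≤ a) :
    (n - 1).choose a ≤ kiN n a + (n - 1).choose (a - 1) * (a * 3) := by
  have h1 := GSet_card_lower (n - 1) a 3 ha
  have h2 : (GSet (n - 1) a 3).card ≤ kiN n a :=
    lower_aux (by omega) _ (KSet_finite n a) (fun P hP => FG_mem_KSet hP)
  omega

lemma choose_pred (n a : ℕ) (ha : 1 ≤ a) :
    n.choose a ≤ (n - 1).choose a + (n - 1).choose (a - 1) := by
  rcases n with _ | m
  · rw [Nat.choose_eq_zero_of_lt (by omega)]
    omega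
  · have : a = (a - 1) + 1 := by omega
    rw [this, Nat.choose_succ_succ m (a - 1)]
    simp [Nat.add_comm]

def errN (n a : ℕ) : ℕ :=
  (n - 1).choose (a - 1) + (n - 1).choose (a - 1) * (a * 3)
    + ((n + a) * (a + 1)).choose (a - 1) + (n * (2 * a)).choose (a - 1) * (a * (2 * a))

lemma ki_bounds (n a : ℕ) (ha : 1 ≤ a) :
    n.choose a ≤ kiN n a + errN n a ∧ kiN n a ≤ n.choose a + errN n a := by
  have h1 := ki_lower n a ha
  have h2 := ki_upper n a ha
  have h3 := choose_pred n a ha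
  have h4 : (n - 1).choose a ≤ n.choose a := Nat.choose_le_choose a (by omega)
  unfold errN
  omega

lemma mia_bounds (n a : ℕ) (ha : 1 ≤ a) :
    n.choose a ≤ miaN n a + errN n a ∧ miaN n a ≤ n.choose a + errN n a := by
  have h1 := mia_lower n a ha
  have h2 := mia_upper n a ha
  have h3 := choose_pred n a ha
  have h4 : (n - 1).choose a ≤ n.choose a := Nat.choose_le_choose a (by omega)
  unfold errN
  omega

def Ca (a : ℕ) : ℕ := 1 + a * 3 + (a + 1) ^ (a - 1) + (2 * a) ^ (a - 1) * (a * (2 * a))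

lemma err_le (n a : ℕ) : errN n a ≤ Ca a * (n + a) ^ (a - 1) := by
  unfold errN Ca
  have hb : (n - 1).choose (a - 1) ≤ (n + a) ^ (a - 1) :=
    le_trans (Nat.choose_le_pow _ _) (Nat.pow_le_pow_left (by omega) _)
  have hc : ((n + a) * (a + 1)).choose (a - 1) ≤ (n + a) ^ (a - 1) * (a + 1) ^ (a - 1) := by
    refine le_trans (Nat.choose_le_pow _ _) ?_
    rw [← Nat.mul_pow]
  have hd : (n * (2 * a)).choose (a - 1) ≤ (n + a) ^ (a - 1) * (2 * a) ^ (a - 1) := by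
    refine le_trans (Nat.choose_le_pow _ _) ?_
    rw [← Nat.mul_pow]
    exact Nat.pow_le_pow_left (by nlinarith) _
  nlinarith [Nat.mul_le_mul_right (a * 3) hb, Nat.mul_le_mul_right (a * (2 * a)) hd]

lemma n_err_le (n a : ℕ) (ha : 1 ≤ a) (hn : 2 * a + 2 ≤ n) :
    n * errN n a ≤ (Ca a * 2 ^ a * 2 ^ a * Nat.factorial a) * n.choose a := by
  have h1 : n * errN n a ≤ Ca a * (n + a) ^ a := by
    have := err_le n a
    calc n * errN n a ≤ n * (Ca a * (n + a) ^ (a - 1)) := Nat.mul_le_mul_left n this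
      _ = Ca a * (n * (n + a) ^ (a - 1)) := by ring
      _ ≤ Ca a * ((n + a) * (n + a) ^ (a - 1)) :=
          Nat.mul_le_mul_left _ (Nat.mul_le_mul_right _ (by omega))
      _ = Ca a * (n + a) ^ (a - 1 + 1) := by rw [pow_succ]; ring
      _ = Ca a * (n + a) ^ a := by congr 2; omega
  have h2 : (n + a) ^ a ≤ 2 ^ a * n ^ a := by
    rw [← Nat.mul_pow]
    exact Nat.pow_le_pow_left (by omega) _
  have h3 : n ^ a ≤ 2 ^ a * (n + 1 - a) ^ a := by
    rw [← Nat.mul_pow]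
    exact Nat.pow_le_pow_left (by omega) _
  have h4 : (n + 1 - a) ^ a ≤ Nat.factorial a * n.choose a := by
    rw [← Nat.descFactorial_eq_factorial_mul_choose]
    exact Nat.pow_sub_le_descFactorial n a
  calc n * errN n a ≤ Ca a * (n + a) ^ a := h1
    _ ≤ Ca a * (2 ^ a * n ^ a) := Nat.mul_le_mul_left _ h2
    _ ≤ Ca a * (2 ^ a * (2 ^ a * (n + 1 - a) ^ a)) :=
        Nat.mul_le_mul_left _ (Nat.mul_le_mul_left _ h3)
    _ ≤ Ca a * (2 ^ a * (2 ^ a * (Nat.factorial a * n.choose a))) :=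
        Nat.mul_le_mul_left _ (Nat.mul_le_mul_left _ (Nat.mul_le_mul_left _ h4))
    _ = (Ca a * 2 ^ a * 2 ^ a * Nat.factorial a) * n.choose a := by ring

lemma ki_eq (n a : ℕ) : ki n a = kiN n a := rfl
lemma mia_eq (n a : ℕ) : mia n a = miaN n a := rfl

lemma one_supp : {k : ℕ | (1 : Equiv.Perm ℕ) k ≠ k} = ∅ := by
  ext k; simp

lemma KSet_zero (n : ℕ) : KSet n 0 = {1} := by
  ext w
  simp only [Set.mem_singleton_iff]
  constructor
  · rintro ⟨hk, hsupp⟩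
    obtain ⟨hp, hd, hw⟩ := KL_spec hk
    have h1 : {x : ℕ | w x ≠ x} = ↑((KL n w).toFinset.biUnion suppIcc) := kostant_supp hp hd hw
    have hfin : {x : ℕ | w x ≠ x}.Finite := by rw [h1]; exact Set.toFinite _
    have hempty : {x : ℕ | w x ≠ x} = ∅ := by
      rw [← Set.ncard_eq_zero hfin]; omega
    ext k
    by_contra hc
    have : k ∈ {x : ℕ | w x ≠ x} := by
      simp only [Set.mem_setOf_eq]
      simpa using hc
    rw [hempty] at this
    exact this
  · rintro rfl
    refine ⟨⟨[], by simp, List.Pairwise.nil, by simp⟩, ?_⟩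
    rw [one_supp]
    simp

lemma MSet_zero (n : ℕ) : MSet n 0 = {1} := by
  ext w
  simp only [Set.mem_singleton_iff]
  constructor
  · rintro ⟨hinv, havoid, hsupp⟩
    have hfin : {x : ℕ | w x ≠ x}.Finite := by
      apply Set.Finite.subset (Set.finite_Icc 1 n)
      intro x hx
      have := hinv.1 x hx
      rw [Set.mem_Icc]
      omega
    have hempty : {x : ℕ | w x ≠ x} = ∅ := by
      rw [← Set.ncard_eq_zero hfin]; omega
    ext k
    by_contra hc
    have : k ∈ {x : ℕ | w x ≠ x} := by
      simp only [Set.mem_setOf_eq]; simpa using hc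
    rw [hempty] at this
    exact this
  · rintro rfl
    refine ⟨⟨fun k hk => absurd rfl hk, one_mul 1⟩, ?_, ?_⟩
    · intro p q r h1 h2 h3 h4 hcon
      simp only [Equiv.Perm.one_apply] at hcon
      omega
    · rw [one_supp]; simp



theorem ki_div_mi_tendsto (a : ℕ) :
    Filter.Tendsto (fun n : ℕ => (ki n a : ℝ) / (mia n a : ℝ))
      Filter.atTop (nhds 1) := by
  rcases Nat.eq_zero_or_pos a with rfl | ha
  · have h : ∀ n : ℕ, (ki n 0 : ℝ) / (mia n 0 : ℝ) = 1 := by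
      intro n
      have h1 : ki n 0 = 1 := by
        rw [ki_eq, kiN, KSet_zero, Set.ncard_singleton]
      have h2 : mia n 0 = 1 := by
        rw [mia_eq, miaN, MSet_zero, Set.ncard_singleton]
      rw [h1, h2]
      norm_num
    simp only [h]
    exact tendsto_const_nhds
  · set C : ℕ → ℝ := fun n => (n.choose a : ℝ) with hC
    set E : ℕ → ℝ := fun n => (errN n a : ℝ) with hE
    set M : ℝ := ((Ca a * 2 ^ a * 2 ^ a * Nat.factorial a : ℕ) : ℝ) with hM
    have hCpos : ∀ n : ℕ, a ≤ n → 0 < C n := by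
      intro n hn
      simp only [hC]
      exact_mod_cast Nat.choose_pos hn
    have hEnn : ∀ n, 0 ≤ E n := fun n => by simp [hE]
    set t : ℕ → ℝ := fun n => E n / C n with ht
    have htn : ∀ n, 0 ≤ t n := by
      intro n
      exact div_nonneg (hEnn n) (by simp [hC])
    have htle : ∀ n : ℕ, 2 * a + 2 ≤ n → t n ≤ M / n := by
      intro n hn
      have hnat := n_err_le n a ha hn
      have hcast : (n : ℝ) * E n ≤ M * C n := by
        simp only [hE, hC, hM]
        exact_mod_cast hnat
      rw [ht]
      rw [div_le_div_iff₀ (hCpos n (by omega)) (by exact_mod_cast (by omega : 0 < n))]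
      nlinarith
    have htzero : Filter.Tendsto t Filter.atTop (nhds 0) := by
      apply tendsto_of_tendsto_of_tendsto_of_le_of_le'
        (tendsto_const_nhds (x := (0 : ℝ))) (tendsto_const_div_atTop_nhds_zero_nat M)
      · exact Filter.Eventually.of_forall htn
      · rw [Filter.eventually_atTop]
        exact ⟨2 * a + 2, htle⟩
    have hev2 : ∀ᶠ n in Filter.atTop, t n < 1 / 2 ∧ 2 * a + 2 ≤ n := by
      refine Filter.Eventually.and ?_ (Filter.eventually_atTop.2 ⟨2 * a + 2, fun n hn => hn⟩)
      exact htzero.eventually (eventually_lt_nhds (by norm_num : (0 : ℝ) < 1 / 2))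
    have hkiB : ∀ n : ℕ, 2 * a + 2 ≤ n →
        C n - E n ≤ (ki n a : ℝ) ∧ (ki n a : ℝ) ≤ C n + E n := by
      intro n hn
      have hb := ki_bounds n a ha
      rw [ki_eq]
      have h1 : (n.choose a : ℝ) ≤ (kiN n a : ℝ) + (errN n a : ℝ) := by exact_mod_cast hb.1
      have h2 : (kiN n a : ℝ) ≤ (n.choose a : ℝ) + (errN n a : ℝ) := by exact_mod_cast hb.2
      constructor <;> · simp only [hC, hE]; linarith
    have hmiaB : ∀ n : ℕ, 2 * a + 2 ≤ n →
        C n - E n ≤ (mia n a : ℝ) ∧ (mia n a : ℝ) ≤ C n + E n := by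
      intro n hn
      have hb := mia_bounds n a ha
      rw [mia_eq]
      have h1 : (n.choose a : ℝ) ≤ (miaN n a : ℝ) + (errN n a : ℝ) := by exact_mod_cast hb.1
      have h2 : (miaN n a : ℝ) ≤ (n.choose a : ℝ) + (errN n a : ℝ) := by exact_mod_cast hb.2
      constructor <;> · simp only [hC, hE]; linarith
    have key : ∀ n : ℕ, t n < 1 / 2 ∧ 2 * a + 2 ≤ n →
        (C n - E n) / (C n + E n) ≤ (ki n a : ℝ) / (mia n a : ℝ) ∧
        (ki n a : ℝ) / (mia n a : ℝ) ≤ (C n + E n) / (C n - E n) := by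
      rintro n ⟨ht2, hn⟩
      have hCp := hCpos n (by omega)
      have hEC : E n < C n / 2 := by
        have h3 : t n * C n < (1 / 2) * C n := mul_lt_mul_of_pos_right ht2 hCp
        rw [ht] at h3
        rw [div_mul_cancel₀ _ (ne_of_gt hCp)] at h3
        linarith
      have hk := hkiB n hn
      have hm := hmiaB n hn
      have hmpos : (0 : ℝ) < (mia n a : ℝ) := by linarith
      constructor
      · exact div_le_div₀ (by positivity) hk.1 hmpos hm.2
      · exact div_le_div₀ (by linarith [hEnn n]) hk.2 (by linarith) hm.1
    set L : ℕ → ℝ := fun n => (1 - t n) / (1 + t n) with hL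
    set U : ℕ → ℝ := fun n => (1 + t n) / (1 - t n) with hU
    have h1t : Filter.Tendsto (fun n => 1 - t n) Filter.atTop (nhds 1) := by
      have := (tendsto_const_nhds (x := (1 : ℝ)) (f := Filter.atTop (α := ℕ))).sub htzero
      simpa using this
    have h2t : Filter.Tendsto (fun n => 1 + t n) Filter.atTop (nhds 1) := by
      have := (tendsto_const_nhds (x := (1 : ℝ)) (f := Filter.atTop (α := ℕ))).add htzero
      simpa using this
    have hLtend : Filter.Tendsto L Filter.atTop (nhds 1) := by
      have := h1t.div h2t (by norm_num)
      rw [div_one] at this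
      exact this
    have hUtend : Filter.Tendsto U Filter.atTop (nhds 1) := by
      have := h2t.div h1t (by norm_num)
      rw [div_one] at this
      exact this
    have hLeq : ∀ n : ℕ, a ≤ n → L n = (C n - E n) / (C n + E n) := by
      intro n hn
      have hCp := hCpos n hn
      have hC0 : C n ≠ 0 := ne_of_gt hCp
      have hCE : C n + E n ≠ 0 := by have := hEnn n; positivity
      have h1pt : 1 + t n ≠ 0 := by have := htn n; positivity
      rw [hL]
      dsimp only
      rw [div_eq_div_iff h1pt hCE, ht]
      field_simp
    have hUeq : ∀ n : ℕ, (a ≤ n ∧ t n < 1 / 2) → U n = (C n + E n) / (C n - E n) := by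
      rintro n ⟨hn, ht2⟩
      have hCp := hCpos n hn
      have hC0 : C n ≠ 0 := ne_of_gt hCp
      have hEC : E n < C n / 2 := by
        have h3 : t n * C n < (1 / 2) * C n := mul_lt_mul_of_pos_right ht2 hCp
        rw [ht] at h3
        rw [div_mul_cancel₀ _ (ne_of_gt hCp)] at h3
        linarith
      have hCE : C n - E n ≠ 0 := by intro h; linarith
      have h1mt : 1 - t n ≠ 0 := by
        intro h
        have : t n = 1 := by linarith
        linarith
      rw [hU]
      dsimp only
      rw [div_eq_div_iff h1mt hCE, ht]
      field_simp
    apply tendsto_of_tendsto_of_tendsto_of_le_of_le' hLtend hUtend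
    · refine hev2.mono ?_
      rintro n ⟨ht2, hn⟩
      rw [hLeq n (by omega)]
      exact (key n ⟨ht2, hn⟩).1
    · refine hev2.mono ?_
      rintro n ⟨ht2, hn⟩
      rw [hUeq n ⟨by omega, ht2⟩]
      exact (key n ⟨ht2, hn⟩).2

/-- For a fixed number `a` of transpositions, the proportion of Kostant involutions among
all 321-avoiding involutions in `S_n` with exactly `a` transpositions tends to `1`
as `n → ∞`. -/
theorem ki_div_mi_fixed_a_tendsto_one (a : ℕ) :
    Filter.Tendsto (fun n : ℕ => (ki n a : ℝ) / (mia n a : ℝ))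
      Filter.atTop (nhds 1) := ki_div_mi_tendsto a
end

section
/- The sequence of real numbers s_n := Σ_{a=0}^{⌊n/2⌋} (n+1) · C(n−a, a) · C(n, a) / C(2n, n) tends to 0 as n → ∞. -/
open Finset

lemma choose_le_two_pow' (m k : ℕ) : m.choose k ≤ 2 ^ m := by
  rcases le_or_gt k m with h | h
  · calc m.choose k ≤ ∑ i ∈ range (m + 1), m.choose i :=
        single_le_sum (fun i _ => Nat.zero_le _) (mem_range.2 (Nat.lt_succ_of_le h))
      _ = 2 ^ m := Nat.sum_range_choose m
  · simp [Nat.choose_eq_zero_of_lt h]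

lemma key_sum_le (n : ℕ) :
    ∑ a ∈ Finset.range (n / 2 + 1), (n - a).choose a * n.choose a ≤ 3 ^ n := by
  calc ∑ a ∈ range (n / 2 + 1), (n - a).choose a * n.choose a
      ≤ ∑ a ∈ range (n / 2 + 1), 2 ^ (n - a) * n.choose a := by
        gcongr with a _; exact choose_le_two_pow' _ _
    _ ≤ ∑ a ∈ range (n + 1), 2 ^ (n - a) * n.choose a := by
        apply Finset.sum_le_sum_of_subset
        exact Finset.range_subset_range.2 (by omega)
    _ = 3 ^ n := by
        have := add_pow 1 2 n (R := ℕ)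
        simp only [one_pow, one_mul] at this
        rw [show (3:ℕ) = 1 + 2 by norm_num, this]
        apply Finset.sum_congr rfl
        intro a _
        push_cast
        ring

/-- The sequence `s_n = Σ_{a=0}^{⌊n/2⌋} (n+1)·C(n-a,a)·C(n,a) / C(2n,n)` tends to `0`
as `n → ∞`. -/
theorem sum_div_central_binomial_tendsto_zero :
    Filter.Tendsto (fun n : ℕ =>
        ∑ a ∈ Finset.range (n / 2 + 1),
          (((n + 1) * (n - a).choose a * n.choose a : ℕ) : ℝ) /
            (((2 * n).choose n : ℕ) : ℝ))
      Filter.atTop (nhds 0) := by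
  have hr : ‖(3 / 4 : ℝ)‖ < 1 := by rw [Real.norm_eq_abs, abs_lt]; norm_num
  -- the dominating sequence tends to 0
  have hg : Filter.Tendsto (fun n : ℕ => ((n : ℝ) + 1) * (2 * n + 1) * (3 / 4) ^ n)
      Filter.atTop (nhds 0) := by
    have hsum : Summable (fun n : ℕ => ((n : ℝ) + 1) * (2 * n + 1) * (3 / 4) ^ n) := by
      have h2 := summable_pow_mul_geometric_of_norm_lt_one (R := ℝ) 2 hr
      have h1 := summable_pow_mul_geometric_of_norm_lt_one (R := ℝ) 1 hr
      have h0 := summable_pow_mul_geometric_of_norm_lt_one (R := ℝ) 0 hr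
      have := ((h2.mul_left 2).add (h1.mul_left 3)).add h0
      apply this.congr
      intro n
      push_cast
      ring
    exact hsum.tendsto_atTop_zero
  apply squeeze_zero _ _ hg
  · intro n
    apply Finset.sum_nonneg
    intro a _
    positivity
  · intro n
    have hD : (0 : ℝ) < (((2 * n).choose n : ℕ) : ℝ) := by
      exact_mod_cast Nat.choose_pos (by omega)
    rw [← Finset.sum_div, div_le_iff₀ hD]
    have hN : (∑ a ∈ range (n / 2 + 1),
        (((n + 1) * (n - a).choose a * n.choose a : ℕ) : ℝ)) ≤ ((n : ℝ) + 1) * 3 ^ n := by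
      have : ∑ a ∈ range (n / 2 + 1), (n + 1) * (n - a).choose a * n.choose a
          ≤ (n + 1) * 3 ^ n := by
        calc ∑ a ∈ range (n / 2 + 1), (n + 1) * (n - a).choose a * n.choose a
            = (n + 1) * ∑ a ∈ range (n / 2 + 1), (n - a).choose a * n.choose a := by
              rw [Finset.mul_sum]; apply Finset.sum_congr rfl; intro a _; ring
          _ ≤ (n + 1) * 3 ^ n := Nat.mul_le_mul_left _ (key_sum_le n)
      exact_mod_cast this
    have hB : (4 : ℝ) ^ n ≤ (2 * (n : ℝ) + 1) * (((2 * n).choose n : ℕ) : ℝ) := by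
      exact_mod_cast Nat.four_pow_le_two_mul_add_one_mul_central_binom n
    calc (∑ a ∈ range (n / 2 + 1),
        (((n + 1) * (n - a).choose a * n.choose a : ℕ) : ℝ))
        ≤ ((n : ℝ) + 1) * 3 ^ n := hN
      _ = ((n : ℝ) + 1) * ((3 / 4) ^ n * 4 ^ n) := by
          rw [← mul_pow]; norm_num
      _ ≤ ((n : ℝ) + 1) * ((3 / 4) ^ n * ((2 * (n : ℝ) + 1) * (((2 * n).choose n : ℕ) : ℝ))) := by
          gcongr
      _ = ((n : ℝ) + 1) * (2 * n + 1) * (3 / 4) ^ n * (((2 * n).choose n : ℕ) : ℝ) := by ring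
end
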